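/- Let U ⊆ ℝ² be a bounded, connected open set and let f : U → ℝ² be a 1-Lipschitz map such that the Lebesgue measure of f(U) equals the Lebesgue measure of U. Then f is an isometry, i.e., |f(x) - f(y)| = |x - y| for all x, y ∈ U. -/

import Mathlib

open MeasureTheory Metric Set
open scoped ENNReal NNReal

local notation "E2" => EuclideanSpace ℝ (Fin 2)
local notation "⟪" x ", " y "⟫" => @inner ℝ _ _ x y

/-- A 1-Lipschitz (on U) map does not increase Lebesgue measure of subsets of U. -/
lemma aux_vol_image_le {U S : Set (EuclideanSpace ℝ (Fin 2))}
    (f : EuclideanSpace ℝ (Fin 2) → EuclideanSpace ℝ (Fin 2))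
    (hf : ∀ x ∈ U, ∀ y ∈ U, dist (f x) (f y) ≤ dist x y) (hS : S ⊆ U) :
    volume (f '' S) ≤ volume S := by
  have hlip : LipschitzOnWith 1 f S := by
    intro x hx y hy
    simp only [ENNReal.coe_one, one_mul, edist_dist]
    exact ENNReal.ofReal_le_ofReal (hf x (hS hx) y (hS hy))
  haveI : (μH[(2:ℝ)] : Measure E2).IsAddHaarMeasure := by
    have h2 : (2:ℝ) = ((Module.finrank ℝ E2 : ℕ) : ℝ) := by
      simp [finrank_euclideanSpace_fin]
    rw [h2]
    infer_instance
  have hsmul : (μH[(2:ℝ)] : Measure E2)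
      = Measure.addHaarScalarFactor (μH[(2:ℝ)] : Measure E2) volume • volume :=
    Measure.isAddLeftInvariant_eq_smul _ _
  have hcdef : ∃ c : NNReal, (μH[(2:ℝ)] : Measure E2) = c • volume := ⟨_, hsmul⟩
  obtain ⟨c, hcs⟩ := hcdef
  have hc0 : (c : ℝ≥0∞) ≠ 0 := by
    intro h0
    have hpos : 0 < (μH[(2:ℝ)] : Measure E2) (ball 0 1) :=
      measure_ball_pos _ _ one_pos
    rw [hcs] at hpos
    simp [Measure.smul_apply, h0, ENNReal.smul_def] at hpos
  have key : (c : ℝ≥0∞) * volume (f '' S) ≤ (c : ℝ≥0∞) * volume S := by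
    have h1 : (μH[(2:ℝ)] : Measure E2) (f '' S) ≤ (1 : ℝ≥0∞) ^ (2:ℝ) * μH[(2:ℝ)] S := by
      simpa using hlip.hausdorffMeasure_image_le (by norm_num : (0:ℝ) ≤ 2)
    simp only [ENNReal.one_rpow, one_mul] at h1
    have e1 : (μH[(2:ℝ)] : Measure E2) (f '' S) = (c : ℝ≥0∞) * volume (f '' S) := by
      rw [hcs]; rfl
    have e2 : (μH[(2:ℝ)] : Measure E2) S = (c : ℝ≥0∞) * volume S := by
      rw [hcs]; rfl
    rwa [e1, e2] at h1
  exact (ENNReal.mul_le_mul_iff_right hc0 ENNReal.coe_ne_top).mp key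

/-- Core step: if the two closed half-distance balls around `p` and `q` fit inside `U`,
then `f` preserves the distance between `p` and `q`. -/
lemma aux_stepA {U : Set (EuclideanSpace ℝ (Fin 2))} (hUb : Bornology.IsBounded U)
    (f : EuclideanSpace ℝ (Fin 2) → EuclideanSpace ℝ (Fin 2))
    (hf : ∀ x ∈ U, ∀ y ∈ U, dist (f x) (f y) ≤ dist x y)
    (hmeas : volume (f '' U) = volume U)
    {p q : EuclideanSpace ℝ (Fin 2)} (hp : p ∈ U) (hq : q ∈ U)
    (hpU : closedBall p (dist p q / 2) ⊆ U) (hqU : closedBall q (dist p q / 2) ⊆ U) :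
    dist (f p) (f q) = dist p q := by
  rcases eq_or_ne p q with rfl | hne
  · simp
  set d := dist p q with hd
  have hd0 : 0 < d := dist_pos.mpr hne
  set r := d / 2 with hr
  have hr0 : 0 < r := by positivity
  by_contra hcon
  have hlt : dist (f p) (f q) < d := lt_of_le_of_ne (hf p hp q hq) hcon
  have hfd0 : 0 ≤ dist (f p) (f q) := dist_nonneg
  -- continuity of f on U
  have hfc : ContinuousOn f U := by
    apply LipschitzOnWith.continuousOn (K := 1)
    intro x hx y hy
    simp only [ENNReal.coe_one, one_mul, edist_dist]
    exact ENNReal.ofReal_le_ofReal (hf x hx y hy)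
  set X := f '' closedBall p r with hX
  set Y := f '' closedBall q r with hY
  have hXc : IsCompact X := (isCompact_closedBall p r).image_of_continuousOn (hfc.mono hpU)
  have hYc : IsCompact Y := (isCompact_closedBall q r).image_of_continuousOn (hfc.mono hqU)
  have hXsub : X ⊆ closedBall (f p) r := by
    rintro _ ⟨z, hz, rfl⟩
    exact mem_closedBall.mpr ((hf z (hpU hz) p hp).trans (mem_closedBall.mp hz))
  have hYsub : Y ⊆ closedBall (f q) r := by
    rintro _ ⟨z, hz, rfl⟩
    exact mem_closedBall.mpr ((hf z (hqU hz) q hq).trans (mem_closedBall.mp hz))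
  have hUfin : volume U ≠ ⊤ := hUb.measure_lt_top.ne
  have hbp : ball p r ⊆ U := ball_subset_closedBall.trans hpU
  have hbq : ball q r ⊆ U := ball_subset_closedBall.trans hqU
  have hdifffin : volume (U \ ball p r) ≠ ⊤ :=
    ((measure_mono diff_subset).trans_lt hUfin.lt_top).ne
  have hcbeq : ∀ x : EuclideanSpace ℝ (Fin 2),
      volume (closedBall x r) = volume (ball p r) := by
    intro x
    rw [Measure.addHaar_closedBall_eq_addHaar_ball]
    rw [Measure.addHaar_ball_center volume x, Measure.addHaar_ball_center volume p]
  -- lower bound for volume of X (and Y)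
  have hvol_ge : ∀ x : EuclideanSpace ℝ (Fin 2), ∀ S : Set (EuclideanSpace ℝ (Fin 2)),
      ball x r ⊆ U → S = f '' closedBall x r → volume (ball x r) ≤ volume S := by
    intro x S hxU hSdef
    have hcov : f '' U ⊆ S ∪ f '' (U \ ball x r) := by
      rw [hSdef, ← image_union]
      apply image_mono
      intro z hz
      rcases le_or_gt (dist z x) r with h | h
      · exact Or.inl (mem_closedBall.mpr h)
      · exact Or.inr ⟨hz, fun hm => absurd (mem_ball.mp hm) h.not_gt⟩
    have h2 : volume U ≤ volume S + volume (U \ ball x r) := by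
      calc volume U = volume (f '' U) := hmeas.symm
        _ ≤ volume (S ∪ f '' (U \ ball x r)) := measure_mono hcov
        _ ≤ volume S + volume (f '' (U \ ball x r)) := measure_union_le _ _
        _ ≤ volume S + volume (U \ ball x r) :=
            add_le_add le_rfl (aux_vol_image_le f hf diff_subset)
    have h3 : volume (ball x r) + volume (U \ ball x r) = volume U := by
      have := measure_inter_add_diff (μ := volume) U (measurableSet_ball (x := x) (ε := r))
      rwa [inter_eq_self_of_subset_right hxU] at this
    have h4 : volume (ball x r) + volume (U \ ball x r)
        ≤ volume S + volume (U \ ball x r) := by rw [h3]; exact h2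
    have hfin : volume (U \ ball x r) ≠ ⊤ :=
      ((measure_mono diff_subset).trans_lt hUfin.lt_top).ne
    exact ENNReal.le_of_add_le_add_right hfin h4
  have hXge : volume (ball p r) ≤ volume X := hvol_ge p X hbp hX
  have hYge : volume (ball p r) ≤ volume Y := by
    rw [show volume (ball p r) = volume (ball q r) by
      rw [Measure.addHaar_ball_center volume p, Measure.addHaar_ball_center volume q]]
    exact hvol_ge q Y hbq hY
  -- the closed balls around f p and f q minus images are null
  have hXnull : volume (closedBall (f p) r \ X) = 0 := by
    have h1 : volume (closedBall (f p) r \ X) + volume X = volume (closedBall (f p) r) := by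
      rw [add_comm, measure_add_diff hXc.measurableSet.nullMeasurableSet,
        union_eq_self_of_subset_left hXsub]
    have h2 : volume (closedBall (f p) r) ≤ volume X := (hcbeq (f p)) ▸ hXge
    have hXfin : volume X ≠ ⊤ := ((measure_mono hXsub).trans_lt
      (measure_closedBall_lt_top)).ne
    have h5 : volume (closedBall (f p) r \ X) + volume X ≤ 0 + volume X := by
      rw [zero_add, h1]; exact h2
    simpa using ENNReal.le_of_add_le_add_right hXfin h5
  have hYnull : volume (closedBall (f q) r \ Y) = 0 := by
    have h1 : volume (closedBall (f q) r \ Y) + volume Y = volume (closedBall (f q) r) := by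
      rw [add_comm, measure_add_diff hYc.measurableSet.nullMeasurableSet,
        union_eq_self_of_subset_left hYsub]
    have h2 : volume (closedBall (f q) r) ≤ volume Y := (hcbeq (f q)) ▸ hYge
    have hYfin : volume Y ≠ ⊤ := ((measure_mono hYsub).trans_lt
      (measure_closedBall_lt_top)).ne
    have h5 : volume (closedBall (f q) r \ Y) + volume Y ≤ 0 + volume Y := by
      rw [zero_add, h1]; exact h2
    simpa using ENNReal.le_of_add_le_add_right hYfin h5
  -- the intersection of the two target balls has positive volume
  have hmid : 0 < volume (closedBall (f p) r ∩ closedBall (f q) r) := by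
    set m := midpoint ℝ (f p) (f q) with hm
    set ρ := (d - dist (f p) (f q)) / 2 with hρ
    have hρ0 : 0 < ρ := by simp only [hρ]; linarith
    have hsub : ball m ρ ⊆ closedBall (f p) r ∩ closedBall (f q) r := by
      intro w hw
      have hw' : dist w m < ρ := mem_ball.mp hw
      have h1 : dist m (f p) = dist (f p) (f q) / 2 := by
        rw [hm, dist_midpoint_left]
        simp only [Real.norm_ofNat]
        ring
      have h2 : dist m (f q) = dist (f p) (f q) / 2 := by
        rw [hm, dist_midpoint_right]
        simp only [Real.norm_ofNat]
        ring
      constructor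
      · exact mem_closedBall.mpr (by
          have := (dist_triangle w m (f p)).trans_lt (by linarith : dist w m + dist m (f p) < r)
          · exact this.le)
      · exact mem_closedBall.mpr (by
          have := (dist_triangle w m (f q)).trans_lt (by linarith : dist w m + dist m (f q) < r)
          · exact this.le)
    exact (measure_ball_pos volume m hρ0).trans_le (measure_mono hsub)
  -- hence X ∩ Y has positive volume
  have hXYpos : 0 < volume (X ∩ Y) := by
    have hsub : closedBall (f p) r ∩ closedBall (f q) r
        ⊆ (X ∩ Y) ∪ ((closedBall (f p) r \ X) ∪ (closedBall (f q) r \ Y)) := by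
      intro w ⟨h1, h2⟩
      by_cases hwX : w ∈ X
      · by_cases hwY : w ∈ Y
        · exact Or.inl ⟨hwX, hwY⟩
        · exact Or.inr (Or.inr ⟨h2, hwY⟩)
      · exact Or.inr (Or.inl ⟨h1, hwX⟩)
    have hle : volume (closedBall (f p) r ∩ closedBall (f q) r) ≤
        volume (X ∩ Y) + (volume (closedBall (f p) r \ X) + volume (closedBall (f q) r \ Y)) :=
      (measure_mono hsub).trans
        ((measure_union_le _ _).trans (add_le_add le_rfl (measure_union_le _ _)))
    rw [hXnull, hYnull] at hle
    simpa using hmid.trans_le hle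
  -- but X ∩ Y must be null
  have hXYnull : volume (X ∩ Y) = 0 := by
    set Z := f '' (U \ (ball p r ∪ ball q r)) with hZ
    have hcov : f '' U ⊆ (X ∪ Y) ∪ Z := by
      rw [hX, hY, hZ, ← image_union, ← image_union]
      apply image_mono
      intro z hz
      by_cases h1 : z ∈ ball p r
      · exact Or.inl (Or.inl (ball_subset_closedBall h1))
      · by_cases h2 : z ∈ ball q r
        · exact Or.inl (Or.inr (ball_subset_closedBall h2))
        · exact Or.inr ⟨hz, fun hm => hm.elim h1 h2⟩
    have hdisj : Disjoint (ball p r) (ball q r) := by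
      rw [Set.disjoint_left]
      intro z h1 h2
      have h1' := mem_ball.mp h1
      have h2' := mem_ball.mp h2
      have ht := dist_triangle p z q
      rw [dist_comm p z] at ht
      have hdd : d ≤ dist z p + dist z q := ht
      linarith
    have hvolU : volume (ball p r) + volume (ball q r) + volume (U \ (ball p r ∪ ball q r))
        = volume U := by
      have hm1 := measure_inter_add_diff (μ := volume) U
        ((measurableSet_ball (x := p) (ε := r)).union (measurableSet_ball (x := q) (ε := r)))
      rw [inter_eq_self_of_subset_right (union_subset hbp hbq)] at hm1
      rw [← hm1, measure_union hdisj (measurableSet_ball)]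
    have hXYfin : volume (X ∩ Y) ≠ ⊤ := (((measure_mono inter_subset_left).trans
      (measure_mono hXsub)).trans_lt measure_closedBall_lt_top).ne
    have hchain : volume U + volume (X ∩ Y) ≤ volume U + 0 := by
      calc volume U + volume (X ∩ Y) = volume (f '' U) + volume (X ∩ Y) := by rw [hmeas]
        _ ≤ volume ((X ∪ Y) ∪ Z) + volume (X ∩ Y) := add_le_add (measure_mono hcov) le_rfl
        _ ≤ (volume (X ∪ Y) + volume Z) + volume (X ∩ Y) :=
            add_le_add (measure_union_le _ _) le_rfl
        _ = (volume (X ∪ Y) + volume (X ∩ Y)) + volume Z := by ring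
        _ = (volume X + volume Y) + volume Z := by
            rw [measure_union_add_inter (μ := volume) X hYc.measurableSet]
        _ ≤ (volume (closedBall p r) + volume (closedBall q r)) + volume (U \ (ball p r ∪ ball q r)) := by
            refine add_le_add (add_le_add ?_ ?_) ?_
            · exact aux_vol_image_le f hf hpU
            · exact aux_vol_image_le f hf hqU
            · exact aux_vol_image_le f hf diff_subset
        _ = (volume (ball p r) + volume (ball q r)) + volume (U \ (ball p r ∪ ball q r)) := by
            rw [Measure.addHaar_closedBall_eq_addHaar_ball,
              Measure.addHaar_closedBall_eq_addHaar_ball]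
        _ = volume U := by rw [← hvolU]
        _ = volume U + 0 := by rw [add_zero]
    exact le_antisymm (by simpa using ENNReal.le_of_add_le_add_left hUfin hchain)
      (zero_le)
  exact hXYpos.ne' hXYnull

lemma aux_coord_norm (y : EuclideanSpace ℝ (Fin 2)) : ‖y‖ ^ 2 = y 0 ^ 2 + y 1 ^ 2 := by
  rw [EuclideanSpace.norm_eq]
  rw [Real.sq_sqrt (by positivity)]
  simp [Fin.sum_univ_two, sq_abs]

lemma aux_norm_L {u v : EuclideanSpace ℝ (Fin 2)} (hu : ‖u‖ = 1) (hv : ‖v‖ = 1)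
    (huv : ⟪u, v⟫ = 0) (y : EuclideanSpace ℝ (Fin 2)) :
    ‖y 0 • u + y 1 • v‖ = ‖y‖ := by
  have h1 : ‖y 0 • u + y 1 • v‖ ^ 2 = ‖y‖ ^ 2 := by
    rw [norm_add_sq_real, aux_coord_norm y]
    rw [norm_smul, norm_smul, real_inner_smul_left, real_inner_smul_right, huv]
    simp [hu, hv, mul_pow, sq_abs]
  calc ‖y 0 • u + y 1 • v‖ = Real.sqrt (‖y 0 • u + y 1 • v‖ ^ 2) :=
        (Real.sqrt_sq (norm_nonneg _)).symm
    _ = Real.sqrt (‖y‖ ^ 2) := by rw [h1]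
    _ = ‖y‖ := Real.sqrt_sq (norm_nonneg _)

/-- On a ball where `f` preserves distances, `f` agrees with an affine isometry. -/
lemma aux_model {x : EuclideanSpace ℝ (Fin 2)} {ε : ℝ} (hε : 0 < ε)
    (f : EuclideanSpace ℝ (Fin 2) → EuclideanSpace ℝ (Fin 2))
    (hiso : ∀ p ∈ ball x ε, ∀ q ∈ ball x ε, dist (f p) (f q) = dist p q) :
    ∃ (b : EuclideanSpace ℝ (Fin 2)) (L : EuclideanSpace ℝ (Fin 2) →ₗᵢ[ℝ] EuclideanSpace ℝ (Fin 2)),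
      ∀ y ∈ ball x ε, f y = b + L y := by
  set δ := ε / 2 with hδ
  have hδ0 : 0 < δ := by positivity
  set e₀ : EuclideanSpace ℝ (Fin 2) := EuclideanSpace.single 0 (1:ℝ) with he₀
  set e₁ : EuclideanSpace ℝ (Fin 2) := EuclideanSpace.single 1 (1:ℝ) with he₁
  have hne₀ : ‖e₀‖ = 1 := by rw [he₀, EuclideanSpace.norm_single]; norm_num
  have hne₁ : ‖e₁‖ = 1 := by rw [he₁, EuclideanSpace.norm_single]; norm_num
  set p₀ := x + δ • e₀ with hp₀
  set p₁ := x + δ • e₁ with hp₁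
  have hxmem : x ∈ ball x ε := mem_ball_self hε
  have hmem₀ : p₀ ∈ ball x ε := by
    rw [hp₀, mem_ball, dist_self_add_left, norm_smul, hne₀, mul_one, Real.norm_eq_abs,
      abs_of_pos hδ0, hδ]
    linarith
  have hmem₁ : p₁ ∈ ball x ε := by
    rw [hp₁, mem_ball, dist_self_add_left, norm_smul, hne₁, mul_one, Real.norm_eq_abs,
      abs_of_pos hδ0, hδ]
    linarith
  set u := δ⁻¹ • (f p₀ - f x) with hu
  set v := δ⁻¹ • (f p₁ - f x) with hv
  have hfp₀ : ‖f p₀ - f x‖ = δ := by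
    rw [← dist_eq_norm, hiso p₀ hmem₀ x hxmem, hp₀, dist_self_add_left, norm_smul, hne₀,
      mul_one, Real.norm_eq_abs]
    exact abs_of_pos hδ0
  have hfp₁ : ‖f p₁ - f x‖ = δ := by
    rw [← dist_eq_norm, hiso p₁ hmem₁ x hxmem, hp₁, dist_self_add_left, norm_smul, hne₁,
      mul_one, Real.norm_eq_abs]
    exact abs_of_pos hδ0
  have hnu : ‖u‖ = 1 := by
    rw [hu, norm_smul, hfp₀, Real.norm_eq_abs, abs_of_pos (inv_pos.mpr hδ0)]
    field_simp
  have hnv : ‖v‖ = 1 := by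
    rw [hv, norm_smul, hfp₁, Real.norm_eq_abs, abs_of_pos (inv_pos.mpr hδ0)]
    field_simp
  have hsmul_u : δ • u = f p₀ - f x := by rw [hu, smul_inv_smul₀ hδ0.ne']
  have hsmul_v : δ • v = f p₁ - f x := by rw [hv, smul_inv_smul₀ hδ0.ne']
  -- orthogonality of u and v
  have huv : ⟪u, v⟫ = 0 := by
    have hdist : ‖u - v‖ = ‖e₀ - e₁‖ := by
      have h1 : ‖f p₀ - f p₁‖ = ‖p₀ - p₁‖ := by
        rw [← dist_eq_norm, ← dist_eq_norm]
        exact hiso p₀ hmem₀ p₁ hmem₁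
      have h2 : p₀ - p₁ = δ • (e₀ - e₁) := by rw [hp₀, hp₁, smul_sub]; abel
      have h3 : u - v = δ⁻¹ • (f p₀ - f p₁) := by rw [hu, hv, ← smul_sub]; congr 1; abel
      rw [h3, norm_smul, h1, h2, norm_smul, Real.norm_eq_abs, Real.norm_eq_abs,
        abs_of_pos (inv_pos.mpr hδ0), abs_of_pos hδ0, ← mul_assoc,
        inv_mul_cancel₀ hδ0.ne', one_mul]
    have he01 : ‖e₀ - e₁‖ ^ 2 = 2 := by
      rw [norm_sub_sq_real, hne₀, hne₁]
      have : ⟪e₀, e₁⟫ = 0 := by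
        rw [he₀, he₁]
        rw [EuclideanSpace.inner_single_left]
        simp [EuclideanSpace.single_apply]
      rw [this]; norm_num
    have h4 : ‖u - v‖ ^ 2 = 2 := by rw [hdist, he01]
    rw [norm_sub_sq_real, hnu, hnv] at h4
    linarith
  -- the linear isometry
  set Lmap : EuclideanSpace ℝ (Fin 2) →ₗ[ℝ] EuclideanSpace ℝ (Fin 2) :=
    { toFun := fun y => y 0 • u + y 1 • v
      map_add' := by
        intro a b
        simp only [PiLp.add_apply, add_smul]
        abel
      map_smul' := by
        intro c a
        simp only [PiLp.smul_apply, smul_eq_mul, RingHom.id_apply, smul_smul, smul_add] } with hLmap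
  set L : EuclideanSpace ℝ (Fin 2) →ₗᵢ[ℝ] EuclideanSpace ℝ (Fin 2) :=
    ⟨Lmap, fun y => aux_norm_L hnu hnv huv y⟩ with hL
  have hLapp : ∀ y, L y = y 0 • u + y 1 • v := fun y => rfl
  refine ⟨f x - L x, L, ?_⟩
  intro y hy
  set w : EuclideanSpace ℝ (Fin 2) := f y - f x with hw
  set w' : EuclideanSpace ℝ (Fin 2) := L (y - x) with hw'
  have hnw : ‖w‖ = ‖y - x‖ := by
    rw [hw, ← dist_eq_norm, ← dist_eq_norm]
    exact hiso y hy x hxmem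
  have hnw' : ‖w'‖ = ‖y - x‖ := L.norm_map _
  -- inner products with u and v
  have hinner : ∀ (e z : EuclideanSpace ℝ (Fin 2)), (x + δ • e) ∈ ball x ε →
      δ • z = f (x + δ • e) - f x → ‖z‖ = 1 → ‖e‖ = 1 → ⟪w, z⟫ = ⟪y - x, e⟫ := by
    intro e z hpt hz hz1 he1
    have h1 : ‖f y - f (x + δ • e)‖ = ‖y - (x + δ • e)‖ := by
      rw [← dist_eq_norm, ← dist_eq_norm]; exact hiso y hy (x + δ • e) hpt
    have h2 : f y - f (x + δ • e) = w - δ • z := by rw [hw, hz]; abel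
    have h3 : y - (x + δ • e) = (y - x) - δ • e := by abel
    have h4 : ‖w - δ • z‖ ^ 2 = ‖(y - x) - δ • e‖ ^ 2 := by rw [← h2, ← h3, h1]
    rw [norm_sub_sq_real w (δ • z), norm_sub_sq_real (y - x) (δ • e)] at h4
    have h5 : ‖δ • z‖ = δ := by
      rw [norm_smul, hz1, mul_one, Real.norm_eq_abs]; exact abs_of_pos hδ0
    have h6 : ‖δ • e‖ = δ := by
      rw [norm_smul, he1, mul_one, Real.norm_eq_abs]; exact abs_of_pos hδ0
    rw [h5, h6, hnw, real_inner_smul_right w z δ, real_inner_smul_right (y - x) e δ] at h4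
    have h7 : δ * ⟪w, z⟫ = δ * ⟪y - x, e⟫ := by linarith
    exact mul_left_cancel₀ hδ0.ne' h7
  have hwu : ⟪w, u⟫ = (y - x) 0 := by
    have := hinner e₀ u hmem₀ hsmul_u hnu hne₀
    rw [this, he₀, EuclideanSpace.inner_single_right]
    simp
  have hwv : ⟪w, v⟫ = (y - x) 1 := by
    have := hinner e₁ v hmem₁ hsmul_v hnv hne₁
    rw [this, he₁, EuclideanSpace.inner_single_right]
    simp
  have hww' : ⟪w, w'⟫ = ‖y - x‖ ^ 2 := by
    rw [hw', hLapp, inner_add_right, real_inner_smul_right w u ((y - x) 0),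
      real_inner_smul_right w v ((y - x) 1), hwu, hwv, aux_coord_norm (y - x)]
    ring
  have hzero : w = w' := by
    have h8 : ‖w - w'‖ ^ 2 = 0 := by
      rw [norm_sub_sq_real, hww', hnw, hnw']
      ring
    have h9 : ‖w - w'‖ = 0 := by
      have := sq_eq_zero_iff.mp h8
      exact this
    exact sub_eq_zero.mp (norm_eq_zero.mp h9)
  have h10 : f y - f x = L y - L x := by
    rw [← map_sub]
    exact hw ▸ hzero
  have h11 : f y = f x + (L y - L x) := by
    rw [← h10]; abel
  rw [h11]; abel

/-- Two affine isometric models agreeing on a ball agree everywhere. -/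
lemma aux_unique {b₁ b₂ : EuclideanSpace ℝ (Fin 2)}
    {L₁ L₂ : EuclideanSpace ℝ (Fin 2) →ₗᵢ[ℝ] EuclideanSpace ℝ (Fin 2)}
    {z : EuclideanSpace ℝ (Fin 2)} {r : ℝ} (hr : 0 < r)
    (h : ∀ y ∈ ball z r, b₁ + L₁ y = b₂ + L₂ y) :
    ∀ y, b₁ + L₁ y = b₂ + L₂ y := by
  have hz := h z (mem_ball_self hr)
  have hL : ∀ w : EuclideanSpace ℝ (Fin 2), L₁ w = L₂ w := by
    intro w
    rcases eq_or_ne w 0 with rfl | hw0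
    · simp
    have hnw : 0 < ‖w‖ := norm_pos_iff.mpr hw0
    set t := (r / 2) / ‖w‖ with htd
    have ht : 0 < t := by positivity
    have hmem : z + t • w ∈ ball z r := by
      rw [mem_ball, dist_self_add_left, norm_smul, Real.norm_eq_abs, abs_of_pos ht, htd]
      rw [div_mul_cancel₀ _ hnw.ne']
      linarith
    have h1 := h _ hmem
    rw [map_add, map_add, _root_.map_smul, _root_.map_smul] at h1
    have h2 : t • L₁ w = t • L₂ w := by
      have e1 : b₁ + (L₁ z + t • L₁ w) = (b₁ + L₁ z) + t • L₁ w := by abel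
      have e2 : b₂ + (L₂ z + t • L₂ w) = (b₂ + L₂ z) + t • L₂ w := by abel
      rw [e1, e2, hz] at h1
      exact add_left_cancel h1
    exact smul_right_injective _ ht.ne' h2
  have hb : b₁ = b₂ := by
    have := hz
    rw [hL z] at this
    exact add_right_cancel this
  intro y
  rw [hb, hL y]

theorem stmt0 (U : Set (EuclideanSpace ℝ (Fin 2))) (hUb : Bornology.IsBounded U)
    (hUc : IsConnected U) (hUo : IsOpen U)
    (f : EuclideanSpace ℝ (Fin 2) → EuclideanSpace ℝ (Fin 2))
    (hf : ∀ x ∈ U, ∀ y ∈ U, dist (f x) (f y) ≤ dist x y)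
    (hmeas : volume (f '' U) = volume U) :
    ∀ x ∈ U, ∀ y ∈ U, dist (f x) (f y) = dist x y := by
  -- every point of U has a ball on which f agrees with an affine isometry
  have hloc : ∀ x ∈ U, ∃ ε > 0, ∃ (b : EuclideanSpace ℝ (Fin 2))
      (L : EuclideanSpace ℝ (Fin 2) →ₗᵢ[ℝ] EuclideanSpace ℝ (Fin 2)),
      ∀ y ∈ ball x ε, f y = b + L y := by
    intro x hx
    obtain ⟨ε₀, hε₀, hball⟩ := Metric.isOpen_iff.mp hUo x hx
    have hiso : ∀ p ∈ ball x (ε₀ / 2), ∀ q ∈ ball x (ε₀ / 2), dist (f p) (f q) = dist p q := by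
      intro p hp q hq
      have hp' := mem_ball.mp hp
      have hq' := mem_ball.mp hq
      have hpq : dist p q < ε₀ := by
        calc dist p q ≤ dist p x + dist x q := dist_triangle p x q
          _ < ε₀ / 2 + ε₀ / 2 := by rw [dist_comm x q] at *; exact add_lt_add hp' hq'
          _ = ε₀ := by ring
      have hcp : closedBall p (dist p q / 2) ⊆ U := by
        refine subset_trans ?_ hball
        intro w hw
        have hw' := mem_closedBall.mp hw
        rw [mem_ball]
        calc dist w x ≤ dist w p + dist p x := dist_triangle w p x
          _ < dist p q / 2 + ε₀ / 2 := by
              rcases lt_or_ge (dist w p) (dist p q / 2 + 1) with _ | _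
              · exact add_lt_add_of_le_of_lt hw' hp'
              · exact add_lt_add_of_le_of_lt hw' hp'
          _ ≤ ε₀ / 2 + ε₀ / 2 := by linarith
          _ = ε₀ := by ring
      have hcq : closedBall q (dist p q / 2) ⊆ U := by
        refine subset_trans ?_ hball
        intro w hw
        have hw' := mem_closedBall.mp hw
        rw [mem_ball]
        have hq'' : dist q x < ε₀ / 2 := hq'
        calc dist w x ≤ dist w q + dist q x := dist_triangle w q x
          _ < dist p q / 2 + ε₀ / 2 := add_lt_add_of_le_of_lt hw' hq''
          _ ≤ ε₀ / 2 + ε₀ / 2 := by linarith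
          _ = ε₀ := by ring
      have hsub2 : ball x (ε₀ / 2) ⊆ U := (ball_subset_ball (by linarith)).trans hball
      exact aux_stepA hUb f hf hmeas (hsub2 hp) (hsub2 hq) hcp hcq
    obtain ⟨b, L, hbL⟩ := aux_model (by positivity : (0:ℝ) < ε₀ / 2) f hiso
    exact ⟨ε₀ / 2, by positivity, b, L, hbL⟩
  -- base point and its model
  obtain ⟨x₀, hx₀⟩ := hUc.nonempty
  obtain ⟨ε₀, hε₀, b₀, L₀, hb₀⟩ := hloc x₀ hx₀
  -- connectedness argument
  set A : Set (EuclideanSpace ℝ (Fin 2)) :=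
    {x | ∃ ε > 0, ∀ y ∈ ball x ε, f y = b₀ + L₀ y} with hA
  set B : Set (EuclideanSpace ℝ (Fin 2)) :=
    {x | ∃ ε > 0, ∃ (b : EuclideanSpace ℝ (Fin 2))
      (L : EuclideanSpace ℝ (Fin 2) →ₗᵢ[ℝ] EuclideanSpace ℝ (Fin 2)),
      (∀ y ∈ ball x ε, f y = b + L y) ∧
      ¬ (∀ w, b₀ + L₀ w = b + L w)} with hB
  have hAopen : IsOpen A := by
    rw [Metric.isOpen_iff]
    rintro x ⟨ε, hε, hxA⟩
    refine ⟨ε / 2, by positivity, ?_⟩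
    intro x' hx'
    refine ⟨ε / 2, by positivity, ?_⟩
    intro y hy
    apply hxA
    rw [mem_ball] at *
    calc dist y x ≤ dist y x' + dist x' x := dist_triangle y x' x
      _ < ε / 2 + ε / 2 := add_lt_add hy hx'
      _ = ε := by ring
  have hBopen : IsOpen B := by
    rw [Metric.isOpen_iff]
    rintro x ⟨ε, hε, b, L, hxB, hnot⟩
    refine ⟨ε / 2, by positivity, ?_⟩
    intro x' hx'
    refine ⟨ε / 2, by positivity, b, L, ?_, hnot⟩
    intro y hy
    apply hxB
    rw [mem_ball] at *
    calc dist y x ≤ dist y x' + dist x' x := dist_triangle y x' x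
      _ < ε / 2 + ε / 2 := add_lt_add hy hx'
      _ = ε := by ring
  have hcover : U ⊆ A ∪ B := by
    intro x hx
    obtain ⟨ε, hε, b, L, hbL⟩ := hloc x hx
    by_cases hsame : ∀ w, b₀ + L₀ w = b + L w
    · left
      exact ⟨ε, hε, fun y hy => by rw [hbL y hy, hsame y]⟩
    · right
      exact ⟨ε, hε, b, L, hbL, hsame⟩
  have hAne : (U ∩ A).Nonempty := ⟨x₀, hx₀, ε₀, hε₀, fun y hy => hb₀ y hy⟩
  have hdisj : U ∩ (A ∩ B) = ∅ := by
    rw [eq_empty_iff_forall_notMem]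
    rintro x ⟨_, ⟨ε₁, hε₁, h₁⟩, ⟨ε₂, hε₂, b, L, h₂, hnot⟩⟩
    apply hnot
    apply aux_unique (lt_min hε₁ hε₂) (z := x)
    intro y hy
    rw [mem_ball] at hy
    have hy₁ : y ∈ ball x ε₁ := mem_ball.mpr (hy.trans_le (min_le_left _ _))
    have hy₂ : y ∈ ball x ε₂ := mem_ball.mpr (hy.trans_le (min_le_right _ _))
    rw [← h₁ y hy₁, ← h₂ y hy₂]
  have hBempty : ¬ (U ∩ B).Nonempty := by
    intro hBne
    obtain ⟨x, hx⟩ := hUc.isPreconnected A B hAopen hBopen hcover hAne hBne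
    rw [eq_empty_iff_forall_notMem] at hdisj
    exact hdisj x ⟨hx.1, hx.2⟩
  have hfinal : ∀ x ∈ U, f x = b₀ + L₀ x := by
    intro x hx
    rcases hcover hx with hxA | hxB
    · obtain ⟨ε, hε, hball⟩ := hxA
      exact hball x (mem_ball_self hε)
    · exact absurd ⟨x, hx, hxB⟩ hBempty
  intro x hx y hy
  rw [hfinal x hx, hfinal y hy, dist_add_left, L₀.isometry.dist_eq]
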